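/- arXiv:math/0609488 — 5 statements merged into one kernel-verified Lean document; each statement's English description precedes it below -/
import Mathlib

section
/- For α in (0,1) and p in (0,1) with p̄ = 1 - p, the function q(x) = p·p̄·sin(απ)·x^{α-1}·(1-x)^{α-1} / (π·[p̄²·x^{2α} + p²·(1-x)^{2α} + 2·p·p̄·x^α·(1-x)^α·cos(απ)]) on (0,1) is a probability density, i.e., it is nonnegative on (0,1) and integrates to 1 over (0,1). -/
open Real MeasureTheory

lemma stmt0_aux_pos (p c s A B : ℝ) (hp0 : 0 < p) (hB : 0 < B)
    (hs : 0 < s) (hcs : s ^ 2 + c ^ 2 = 1) :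
    0 < (1 - p) ^ 2 * (A * A) + p ^ 2 * (B * B) + 2 * p * (1 - p) * A * B * c := by
  have key : p ^ 2 * B ^ 2 * (s ^ 2 + c ^ 2) = p ^ 2 * B ^ 2 := by rw [hcs]; ring
  nlinarith [sq_nonneg ((1 - p) * A + c * p * B),
    mul_pos (mul_pos (mul_pos hp0 hp0) (mul_pos hB hB)) (mul_pos hs hs), key]

lemma stmt0_aux_low1 (p c s A B : ℝ) (hcs : s ^ 2 + c ^ 2 = 1) :
    p ^ 2 * s ^ 2 * (B * B) ≤
      (1 - p) ^ 2 * (A * A) + p ^ 2 * (B * B) + 2 * p * (1 - p) * A * B * c := by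
  have key : p ^ 2 * B ^ 2 * (s ^ 2 + c ^ 2) = p ^ 2 * B ^ 2 := by rw [hcs]; ring
  nlinarith [sq_nonneg ((1 - p) * A + c * p * B), key]

lemma stmt0_aux_low2 (p c s A B : ℝ) (hcs : s ^ 2 + c ^ 2 = 1) :
    (1 - p) ^ 2 * s ^ 2 * (A * A) ≤
      (1 - p) ^ 2 * (A * A) + p ^ 2 * (B * B) + 2 * p * (1 - p) * A * B * c := by
  have key : (1 - p) ^ 2 * A ^ 2 * (s ^ 2 + c ^ 2) = (1 - p) ^ 2 * A ^ 2 := by rw [hcs]; ring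
  nlinarith [sq_nonneg (p * B + c * (1 - p) * A), key]

lemma stmt0_aux_div (p c s A B : ℝ) (hp1' : 0 < 1 - p) (hA : 0 < A)
    (hs : 0 < s) (hcs : s ^ 2 + c ^ 2 = 1) :
    1 + ((c + p / (1 - p) * (B * A⁻¹)) / s) ^ 2 =
      ((1 - p) ^ 2 * (A * A) + p ^ 2 * (B * B) + 2 * p * (1 - p) * A * B * c) /
        (s ^ 2 * (1 - p) ^ 2 * A ^ 2) := by
  rw [eq_div_iff (by positivity)]
  field_simp
  linear_combination ((1 - p) ^ 2 * A ^ 2) * hcs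

lemma stmt0_aux_final (α p s x A B P D : ℝ) (hα : α ≠ 0) (hx : x ≠ 0) (hx1 : 1 - x ≠ 0)
    (hp : 1 - p ≠ 0) (hA : A ≠ 0) (hs : s ≠ 0) (hP : P ≠ 0) (hD : D ≠ 0) :
    p * (1 - p) * s * (A / x) * (B / (1 - x)) / (P * D) =
      -(1 / (α * P)) * (1 / (D / (s ^ 2 * (1 - p) ^ 2 * A ^ 2)) *
        (p / (1 - p) * (α * (B / (1 - x)) * -1 * A⁻¹ + B * (-α * (A * x)⁻¹)) / s)) := by
  field_simp
  ring

theorem stmt_0 (α p : ℝ) (hα : α ∈ Set.Ioo (0:ℝ) 1) (hp : p ∈ Set.Ioo (0:ℝ) 1) :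
    (∀ x ∈ Set.Ioo (0:ℝ) 1, 0 ≤
      p * (1 - p) * Real.sin (α * π) * x ^ (α - 1) * (1 - x) ^ (α - 1) /
        (π * ((1 - p) ^ 2 * x ^ (2 * α) + p ^ 2 * (1 - x) ^ (2 * α) +
          2 * p * (1 - p) * x ^ α * (1 - x) ^ α * Real.cos (α * π)))) ∧
    ∫ x in (0:ℝ)..1,
      p * (1 - p) * Real.sin (α * π) * x ^ (α - 1) * (1 - x) ^ (α - 1) /
        (π * ((1 - p) ^ 2 * x ^ (2 * α) + p ^ 2 * (1 - x) ^ (2 * α) +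
          2 * p * (1 - p) * x ^ α * (1 - x) ^ α * Real.cos (α * π))) = 1 := by
  obtain ⟨hα0, hα1⟩ := hα
  obtain ⟨hp0, hp1⟩ := hp
  have hp1' : (0:ℝ) < 1 - p := by linarith
  have hπ : (0:ℝ) < π := Real.pi_pos
  have hαπ : 0 < α * π := by positivity
  have hαπ' : α * π < π := by nlinarith
  set s := Real.sin (α * π) with hs_def
  set c := Real.cos (α * π) with hc_def
  have hs : 0 < s := Real.sin_pos_of_pos_of_lt_pi hαπ hαπ'
  have hcs : s ^ 2 + c ^ 2 = 1 := Real.sin_sq_add_cos_sq _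
  set q : ℝ → ℝ := fun x =>
    p * (1 - p) * s * x ^ (α - 1) * (1 - x) ^ (α - 1) /
      (π * ((1 - p) ^ 2 * x ^ (2 * α) + p ^ 2 * (1 - x) ^ (2 * α) +
        2 * p * (1 - p) * x ^ α * (1 - x) ^ α * c)) with hq_def
  -- denominator core positivity
  have hDpos : ∀ x : ℝ, 0 < x → x < 1 →
      0 < (1 - p) ^ 2 * x ^ (2 * α) + p ^ 2 * (1 - x) ^ (2 * α) +
        2 * p * (1 - p) * x ^ α * (1 - x) ^ α * c := by
    intro x hx0 hx1
    have hx1' : (0:ℝ) < 1 - x := by linarith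
    have hB : 0 < (1 - x) ^ α := Real.rpow_pos_of_pos hx1' α
    rw [two_mul, Real.rpow_add hx0, Real.rpow_add hx1']
    exact stmt0_aux_pos p c s _ _ hp0 hB hs hcs
  have part1 : ∀ x ∈ Set.Ioo (0:ℝ) 1, 0 ≤ q x := by
    rintro x ⟨hx0, hx1⟩
    have hx1' : (0:ℝ) < 1 - x := by linarith
    have h1 : 0 < x ^ (α - 1) := Real.rpow_pos_of_pos hx0 _
    have h2 : 0 < (1 - x) ^ (α - 1) := Real.rpow_pos_of_pos hx1' _
    have hD := hDpos x hx0 hx1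
    apply div_nonneg
    · positivity
    · positivity
  refine ⟨part1, ?_⟩
  -- antiderivative
  set F : ℝ → ℝ := fun x =>
    -(1 / (α * π)) * Real.arctan ((c + p / (1 - p) * ((1 - x) ^ α * x ^ (-α))) / s) with hF_def
  have hderiv : ∀ x ∈ Set.Ioo (0:ℝ) 1, HasDerivAt F (q x) x := by
    rintro x ⟨hx0, hx1⟩
    have hx1' : (0:ℝ) < 1 - x := by linarith
    have hA : 0 < x ^ α := Real.rpow_pos_of_pos hx0 α
    have hB : 0 < (1 - x) ^ α := Real.rpow_pos_of_pos hx1' α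
    have d1 : HasDerivAt (fun y : ℝ => y ^ (-α)) (-α * x ^ (-α - 1)) x :=
      Real.hasDerivAt_rpow_const (Or.inl hx0.ne')
    have d2 : HasDerivAt (fun y : ℝ => (1 - y) ^ α) (α * (1 - x) ^ (α - 1) * -1) x :=
      (Real.hasDerivAt_rpow_const (p := α) (Or.inl hx1'.ne')).comp x
        ((hasDerivAt_id x).const_sub 1)
    have d3 := d2.mul d1
    have d4 := (((d3.const_mul (p / (1 - p))).const_add c).div_const s).arctan
    have d5 := d4.const_mul (-(1 / (α * π)))
    refine d5.congr_deriv ?_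
    symm
    have e1 : x ^ (α - 1) = x ^ α / x := by
      rw [Real.rpow_sub hx0, Real.rpow_one]
    have e2 : (1 - x) ^ (α - 1) = (1 - x) ^ α / (1 - x) := by
      rw [Real.rpow_sub hx1', Real.rpow_one]
    have e3 : x ^ (-α) = (x ^ α)⁻¹ := Real.rpow_neg hx0.le α
    have e4 : x ^ (-α - 1) = (x ^ α * x)⁻¹ := by
      rw [show -α - 1 = -(α + 1) by ring, Real.rpow_neg hx0.le, Real.rpow_add hx0,
        Real.rpow_one]
    have e5 : x ^ (2 * α) = x ^ α * x ^ α := by rw [two_mul, Real.rpow_add hx0]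
    have e6 : (1 - x) ^ (2 * α) = (1 - x) ^ α * (1 - x) ^ α := by
      rw [two_mul, Real.rpow_add hx1']
    have hD := hDpos x hx0 hx1
    rw [e5, e6] at hD
    rw [hq_def]
    simp only [Pi.mul_apply]
    rw [e1, e2, e3, e4, e5, e6,
      stmt0_aux_div p c s (x ^ α) ((1 - x) ^ α) hp1' hA hs hcs]
    exact stmt0_aux_final α p s x (x ^ α) ((1 - x) ^ α) π _ hα0.ne' hx0.ne' hx1'.ne'
      hp1'.ne' hA.ne' hs.ne' hπ.ne' hD.ne'
  -- continuity of q on (0,1)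
  have hqcont : ContinuousOn q (Set.Ioo (0:ℝ) 1) := by
    rintro x ⟨hx0, hx1⟩
    have hx1' : (0:ℝ) < 1 - x := by linarith
    apply ContinuousAt.continuousWithinAt
    have hD := hDpos x hx0 hx1
    have hsub : ContinuousAt (fun y : ℝ => 1 - y) x := continuousAt_const.sub continuousAt_id
    have c1 : ContinuousAt (fun y : ℝ => y ^ (α - 1)) x :=
      Real.continuousAt_rpow_const _ _ (Or.inl hx0.ne')
    have c2 : ContinuousAt (fun y : ℝ => (1 - y) ^ (α - 1)) x :=
      (Real.continuousAt_rpow_const _ _ (Or.inl hx1'.ne')).comp hsub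
    have c3 : ContinuousAt (fun y : ℝ => y ^ (2 * α)) x :=
      Real.continuousAt_rpow_const _ _ (Or.inl hx0.ne')
    have c4 : ContinuousAt (fun y : ℝ => (1 - y) ^ (2 * α)) x :=
      (Real.continuousAt_rpow_const _ _ (Or.inl hx1'.ne')).comp hsub
    have c5 : ContinuousAt (fun y : ℝ => y ^ α) x :=
      Real.continuousAt_rpow_const _ _ (Or.inl hx0.ne')
    have c6 : ContinuousAt (fun y : ℝ => (1 - y) ^ α) x :=
      (Real.continuousAt_rpow_const _ _ (Or.inl hx1'.ne')).comp hsub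
    exact ((continuousAt_const.mul c1).mul c2).div
      (continuousAt_const.mul (((continuousAt_const.mul c3).add
        (continuousAt_const.mul c4)).add
        (((continuousAt_const.mul c5).mul c6).mul continuousAt_const)))
      (mul_pos hπ hD).ne'
  -- integrability
  set K1 : ℝ := p * (1 - p) * s * (3⁻¹ : ℝ) ^ (α - 1) /
    (π * (p ^ 2 * s ^ 2 * (3⁻¹ : ℝ) ^ (2 * α))) with hK1_def
  set K2 : ℝ := p * (1 - p) * s * (3⁻¹ : ℝ) ^ (α - 1) /
    (π * ((1 - p) ^ 2 * s ^ 2 * (3⁻¹ : ℝ) ^ (2 * α))) with hK2_def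
  have h3pos : (0:ℝ) < (3⁻¹ : ℝ) ^ (2 * α) := Real.rpow_pos_of_pos (by norm_num) _
  have h3pos' : (0:ℝ) < (3⁻¹ : ℝ) ^ (α - 1) := Real.rpow_pos_of_pos (by norm_num) _
  have key1 : IntegrableOn q (Set.Ioo (0:ℝ) (2/3)) := by
    have hbase : Integrable (fun x : ℝ => K1 * x ^ (α - 1))
        (volume.restrict (Set.Ioo (0:ℝ) (2/3))) :=
      ((intervalIntegrable_iff_integrableOn_Ioo_of_le (by norm_num)).mp
        ((intervalIntegral.intervalIntegrable_rpow' (by linarith)).const_mul K1))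
    refine hbase.mono' ((hqcont.mono ?_).aestronglyMeasurable measurableSet_Ioo) ?_
    · exact Set.Ioo_subset_Ioo_right (by norm_num)
    · filter_upwards [ae_restrict_mem measurableSet_Ioo] with x hx
      obtain ⟨hx0, hx23⟩ := hx
      have hx1 : x < 1 := by linarith
      have hx1' : (0:ℝ) < 1 - x := by linarith
      have hA1 : 0 < x ^ (α - 1) := Real.rpow_pos_of_pos hx0 _
      have hB1 : 0 < (1 - x) ^ (α - 1) := Real.rpow_pos_of_pos hx1' _
      rw [Real.norm_eq_abs, abs_of_nonneg (part1 x ⟨hx0, hx1⟩)]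
      have hb1 : (1 - x) ^ (α - 1) ≤ (3⁻¹ : ℝ) ^ (α - 1) :=
        Real.rpow_le_rpow_of_nonpos (by norm_num) (by linarith) (by linarith)
      have hb2 : ((3:ℝ)⁻¹) ^ (2 * α) ≤ (1 - x) ^ (2 * α) :=
        Real.rpow_le_rpow (by norm_num) (by linarith) (by positivity)
      have hDlow : p ^ 2 * s ^ 2 * ((3:ℝ)⁻¹) ^ (2 * α) ≤
          (1 - p) ^ 2 * x ^ (2 * α) + p ^ 2 * (1 - x) ^ (2 * α) +
            2 * p * (1 - p) * x ^ α * (1 - x) ^ α * c := by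
        calc p ^ 2 * s ^ 2 * ((3:ℝ)⁻¹) ^ (2 * α)
            ≤ p ^ 2 * s ^ 2 * (1 - x) ^ (2 * α) :=
              mul_le_mul_of_nonneg_left hb2 (by positivity)
          _ ≤ _ := by
              rw [two_mul, Real.rpow_add hx0, Real.rpow_add hx1']
              exact stmt0_aux_low1 p c s _ _ hcs
      have hnum : p * (1 - p) * s * x ^ (α - 1) * (1 - x) ^ (α - 1) ≤
          p * (1 - p) * s * x ^ (α - 1) * (3⁻¹ : ℝ) ^ (α - 1) :=
        mul_le_mul_of_nonneg_left hb1 (by positivity)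
      calc q x ≤ p * (1 - p) * s * x ^ (α - 1) * (3⁻¹ : ℝ) ^ (α - 1) /
            (π * (p ^ 2 * s ^ 2 * (3⁻¹ : ℝ) ^ (2 * α))) := by
            rw [hq_def]
            exact div_le_div₀ (by positivity) hnum (by positivity)
              (mul_le_mul_of_nonneg_left hDlow hπ.le)
        _ = K1 * x ^ (α - 1) := by rw [hK1_def]; ring
  have key2 : IntegrableOn q (Set.Ioo (1/3 : ℝ) 1) := by
    have hbase0 : IntervalIntegrable (fun x : ℝ => (1 - x) ^ (α - 1)) volume
        (1 - (0:ℝ)) (1 - (2/3 : ℝ)) :=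
      (intervalIntegral.intervalIntegrable_rpow' (a := 0) (b := 2/3) (by linarith)).comp_sub_left 1
    have hbase0' : IntervalIntegrable (fun x : ℝ => (1 - x) ^ (α - 1)) volume (1/3 : ℝ) 1 := by
      norm_num at hbase0
      exact hbase0.symm
    have hbase : Integrable (fun x : ℝ => K2 * (1 - x) ^ (α - 1))
        (volume.restrict (Set.Ioo (1/3 : ℝ) 1)) :=
      ((intervalIntegrable_iff_integrableOn_Ioo_of_le (by norm_num)).mp
        (hbase0'.const_mul K2))
    refine hbase.mono' ((hqcont.mono ?_).aestronglyMeasurable measurableSet_Ioo) ?_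
    · exact Set.Ioo_subset_Ioo_left (by norm_num)
    · filter_upwards [ae_restrict_mem measurableSet_Ioo] with x hx
      obtain ⟨hx13, hx1⟩ := hx
      have hx0 : (0:ℝ) < x := by linarith
      have hx1' : (0:ℝ) < 1 - x := by linarith
      have hA1 : 0 < x ^ (α - 1) := Real.rpow_pos_of_pos hx0 _
      have hB1 : 0 < (1 - x) ^ (α - 1) := Real.rpow_pos_of_pos hx1' _
      rw [Real.norm_eq_abs, abs_of_nonneg (part1 x ⟨hx0, hx1⟩)]
      have hb1 : x ^ (α - 1) ≤ (3⁻¹ : ℝ) ^ (α - 1) :=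
        Real.rpow_le_rpow_of_nonpos (by norm_num) (by linarith) (by linarith)
      have hb2 : ((3:ℝ)⁻¹) ^ (2 * α) ≤ x ^ (2 * α) :=
        Real.rpow_le_rpow (by norm_num) (by linarith) (by positivity)
      have hDlow : (1 - p) ^ 2 * s ^ 2 * ((3:ℝ)⁻¹) ^ (2 * α) ≤
          (1 - p) ^ 2 * x ^ (2 * α) + p ^ 2 * (1 - x) ^ (2 * α) +
            2 * p * (1 - p) * x ^ α * (1 - x) ^ α * c := by
        calc (1 - p) ^ 2 * s ^ 2 * ((3:ℝ)⁻¹) ^ (2 * α)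
            ≤ (1 - p) ^ 2 * s ^ 2 * x ^ (2 * α) :=
              mul_le_mul_of_nonneg_left hb2 (by positivity)
          _ ≤ _ := by
              rw [two_mul, Real.rpow_add hx0, Real.rpow_add hx1']
              exact stmt0_aux_low2 p c s _ _ hcs
      have hnum : p * (1 - p) * s * x ^ (α - 1) * (1 - x) ^ (α - 1) ≤
          p * (1 - p) * s * (3⁻¹ : ℝ) ^ (α - 1) * (1 - x) ^ (α - 1) := by
        have := mul_le_mul_of_nonneg_left hb1 (by positivity :
          (0:ℝ) ≤ p * (1 - p) * s)
        exact mul_le_mul_of_nonneg_right this hB1.le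
      calc q x ≤ p * (1 - p) * s * (3⁻¹ : ℝ) ^ (α - 1) * (1 - x) ^ (α - 1) /
            (π * ((1 - p) ^ 2 * s ^ 2 * (3⁻¹ : ℝ) ^ (2 * α))) := by
            rw [hq_def]
            exact div_le_div₀ (by positivity) hnum (by positivity)
              (mul_le_mul_of_nonneg_left hDlow hπ.le)
        _ = K2 * (1 - x) ^ (α - 1) := by rw [hK2_def]; ring
  have hIoo : IntegrableOn q (Set.Ioo (0:ℝ) 1) := by
    refine (key1.union key2).mono_set ?_
    rintro x ⟨hx0, hx1⟩
    rcases lt_or_ge x (2/3 : ℝ) with h | h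
    · exact Or.inl ⟨hx0, h⟩
    · exact Or.inr ⟨by linarith, hx1⟩
  have hint : IntervalIntegrable q volume 0 1 :=
    (intervalIntegrable_iff_integrableOn_Ioo_of_le (by norm_num)).mpr hIoo
  -- limit at 0
  have hF0 : Filter.Tendsto F (nhdsWithin 0 (Set.Ioi 0)) (nhds (-(1 / (α * π)) * (π / 2))) := by
    have h0 : Filter.Tendsto (fun x : ℝ => x ^ α) (nhdsWithin 0 (Set.Ioi 0))
        (nhdsWithin 0 (Set.Ioi 0)) := by
      rw [tendsto_nhdsWithin_iff]
      constructor
      · have hco : ContinuousAt (fun x : ℝ => x ^ α) 0 :=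
          Real.continuousAt_rpow_const 0 α (Or.inr hα0.le)
        have h2 : Filter.Tendsto (fun x : ℝ => x ^ α) (nhdsWithin 0 (Set.Ioi 0))
            (nhds ((0:ℝ) ^ α)) := hco.tendsto.mono_left nhdsWithin_le_nhds
        simpa [Real.zero_rpow hα0.ne'] using h2
      · filter_upwards [self_mem_nhdsWithin] with y hy
        exact Real.rpow_pos_of_pos hy α
    have hinv : Filter.Tendsto (fun x : ℝ => (x ^ α)⁻¹) (nhdsWithin 0 (Set.Ioi 0))
        Filter.atTop := tendsto_inv_nhdsGT_zero.comp h0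
    have hcoef : Filter.Tendsto (fun x : ℝ => p / (1 - p) * (1 - x) ^ α)
        (nhdsWithin 0 (Set.Ioi 0)) (nhds (p / (1 - p))) := by
      have hco : ContinuousAt (fun x : ℝ => p / (1 - p) * (1 - x) ^ α) 0 := by
        refine continuousAt_const.mul ?_
        exact (Real.continuousAt_rpow_const _ _ (Or.inl (by norm_num))).comp
          (continuousAt_const.sub continuousAt_id)
      have h2 : Filter.Tendsto (fun x : ℝ => p / (1 - p) * (1 - x) ^ α)
          (nhdsWithin 0 (Set.Ioi 0)) (nhds (p / (1 - p) * ((1:ℝ) - 0) ^ α)) :=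
        hco.tendsto.mono_left nhdsWithin_le_nhds
      simpa using h2
    have hmul : Filter.Tendsto (fun x : ℝ => p / (1 - p) * ((1 - x) ^ α * x ^ (-α)))
        (nhdsWithin 0 (Set.Ioi 0)) Filter.atTop := by
      have := Filter.Tendsto.pos_mul_atTop (by positivity : (0:ℝ) < p / (1 - p)) hcoef hinv
      refine this.congr' ?_
      filter_upwards [self_mem_nhdsWithin] with y hy
      rw [Real.rpow_neg (le_of_lt hy)]
      ring
    have harg : Filter.Tendsto
        (fun x : ℝ => (c + p / (1 - p) * ((1 - x) ^ α * x ^ (-α))) / s)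
        (nhdsWithin 0 (Set.Ioi 0)) Filter.atTop :=
      (Filter.tendsto_atTop_add_const_left _ c hmul).atTop_div_const hs
    have harctan := (Real.tendsto_arctan_atTop.comp harg).mono_right nhdsWithin_le_nhds
    exact harctan.const_mul _
  -- limit at 1
  have hF1 : Filter.Tendsto F (nhdsWithin 1 (Set.Iio 1))
      (nhds (-(1 / (α * π)) * (π / 2 - α * π))) := by
    have hg1 : ContinuousAt (fun y : ℝ => (1 - y) ^ α) 1 := by
      have hsub : ContinuousAt (fun y : ℝ => 1 - y) 1 :=
        continuousAt_const.sub continuousAt_id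
      have h : ContinuousAt (fun t : ℝ => t ^ α) ((1:ℝ) - 1) := by
        rw [show (1:ℝ) - 1 = 0 by norm_num]
        exact Real.continuousAt_rpow_const 0 α (Or.inr hα0.le)
      exact h.comp hsub
    have hco : ContinuousAt F 1 := by
      rw [hF_def]
      refine continuousAt_const.mul (Real.continuous_arctan.continuousAt.comp ?_)
      refine (continuousAt_const.add (continuousAt_const.mul (hg1.mul ?_))).div_const s
      exact Real.continuousAt_rpow_const 1 (-α) (Or.inl one_ne_zero)
    have hval : F 1 = -(1 / (α * π)) * (π / 2 - α * π) := by
      have h2 : Real.arctan (c / s) = π / 2 - α * π := by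
        have ht : Real.tan (π / 2 - α * π) = c / s := by
          rw [Real.tan_eq_sin_div_cos, Real.sin_pi_div_two_sub, Real.cos_pi_div_two_sub,
            ← hs_def, ← hc_def]
        rw [← ht, Real.arctan_tan (by linarith) (by linarith)]
      rw [hF_def]
      simp only [sub_self, Real.zero_rpow hα0.ne', zero_mul, mul_zero, add_zero]
      rw [h2]
    have h2 : Filter.Tendsto F (nhdsWithin 1 (Set.Iio 1)) (nhds (F 1)) :=
      hco.tendsto.mono_left nhdsWithin_le_nhds
    rw [hval] at h2
    exact h2
  have key := intervalIntegral.integral_eq_sub_of_hasDerivAt_of_tendsto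
    (by norm_num : (0:ℝ) < 1) hderiv hint hF0 hF1
  rw [key]
  have hne : α * π ≠ 0 := ne_of_gt hαπ
  field_simp
  ring
end

section
/- For α in (0,1) and p, p̄ = 1-p in (0,1), the cumulative distribution function on (0,1) given by F(x) = (1/(απ))·arctan( sin(πα)·x^α·p̄ / (cos(απ)·x^α·p̄ + (1-x)^α·p) ) satisfies F'(x) = p·p̄·sin(απ)·x^{α-1}·(1-x)^{α-1} / (π·[p̄²·x^{2α} + p²·(1-x)^{2α} + 2·p·p̄·x^α·(1-x)^α·cos(απ)]) for x ∈ (0,1), provided cos(απ)·x^α·p̄ + (1-x)^α·p ≠ 0. -/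
open Real

theorem stmt_1 (α p : ℝ) (hα : α ∈ Set.Ioo (0:ℝ) 1) (hp : p ∈ Set.Ioo (0:ℝ) 1)
    (x : ℝ) (hx : x ∈ Set.Ioo (0:ℝ) 1)
    (hden : Real.cos (α * π) * x ^ α * (1 - p) + (1 - x) ^ α * p ≠ 0) :
    HasDerivAt
      (fun y : ℝ => (1 / (α * π)) *
        Real.arctan (Real.sin (π * α) * y ^ α * (1 - p) /
          (Real.cos (α * π) * y ^ α * (1 - p) + (1 - y) ^ α * p)))
      (p * (1 - p) * Real.sin (α * π) * x ^ (α - 1) * (1 - x) ^ (α - 1) /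
        (π * ((1 - p) ^ 2 * x ^ (2 * α) + p ^ 2 * (1 - x) ^ (2 * α) +
          2 * p * (1 - p) * x ^ α * (1 - x) ^ α * Real.cos (α * π)))) x := by
  obtain ⟨hα0, hα1⟩ := hα
  obtain ⟨hp0, hp1⟩ := hp
  obtain ⟨hx0, hx1⟩ := hx
  have hx1' : (0:ℝ) < 1 - x := by linarith
  have hpi : (0:ℝ) < π := Real.pi_pos
  have hsc : Real.sin (α * π) ^ 2 + Real.cos (α * π) ^ 2 = 1 :=
    Real.sin_sq_add_cos_sq _
  have hspa : Real.sin (π * α) = Real.sin (α * π) := by rw [mul_comm]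
  -- derivatives of the pieces
  have hA : HasDerivAt (fun y : ℝ => y ^ α) (α * x ^ (α - 1)) x :=
    Real.hasDerivAt_rpow_const (Or.inl hx0.ne')
  have h1y : HasDerivAt (fun y : ℝ => 1 - y) (-1) x := (hasDerivAt_id x).const_sub 1
  have hB : HasDerivAt (fun y : ℝ => (1 - y) ^ α) (α * (1 - x) ^ (α - 1) * (-1)) x :=
    (Real.hasDerivAt_rpow_const (p := α) (Or.inl hx1'.ne')).comp x h1y
  have hu : HasDerivAt (fun y : ℝ => Real.sin (π * α) * y ^ α * (1 - p))
      (Real.sin (π * α) * (α * x ^ (α - 1)) * (1 - p)) x :=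
    (hA.const_mul (Real.sin (π * α))).mul_const (1 - p)
  have hv : HasDerivAt
      (fun y : ℝ => Real.cos (α * π) * y ^ α * (1 - p) + (1 - y) ^ α * p)
      (Real.cos (α * π) * (α * x ^ (α - 1)) * (1 - p) + α * (1 - x) ^ (α - 1) * (-1) * p) x :=
    ((hA.const_mul (Real.cos (α * π))).mul_const (1 - p)).add (hB.mul_const p)
  have hq := hu.div hv hden
  have harc := hq.arctan
  have h := harc.const_mul (1 / (α * π))
  convert h using 1
  case e'_4 => rfl
  case e'_5 => rfl
  case e'_8 => rfl
  -- now the algebraic identity between the two derivative expressions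
  set s := Real.sin (α * π) with hs
  set c := Real.cos (α * π) with hc
  rw [hspa]
  set A := x ^ α with hA'
  set B := (1 - x) ^ α with hB'
  set A1 := x ^ (α - 1) with hA1
  set B1 := (1 - x) ^ (α - 1) with hB1
  have hAx : A = A1 * x := by
    rw [hA', hA1, ← Real.rpow_add_one hx0.ne' (α - 1)]; ring_nf
  have hBx : B = B1 * (1 - x) := by
    rw [hB', hB1, ← Real.rpow_add_one hx1'.ne' (α - 1)]; ring_nf
  have h2A : x ^ (2 * α) = A ^ 2 := by
    rw [hA', two_mul, Real.rpow_add hx0, sq]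
  have h2B : (1 - x) ^ (2 * α) = B ^ 2 := by
    rw [hB', two_mul, Real.rpow_add hx1', sq]
  rw [h2A, h2B]
  have hvx : c * A * (1 - p) + B * p ≠ 0 := hden
  set v := c * A * (1 - p) + B * p with hvdef
  set D := (1 - p) ^ 2 * A ^ 2 + p ^ 2 * B ^ 2 + 2 * p * (1 - p) * A * B * c with hDdef
  have hD : D = (s * A * (1 - p)) ^ 2 + v ^ 2 := by
    rw [hDdef, hvdef]
    linear_combination (-(A * (1 - p)) ^ 2) * hsc
  have hDpos : (0:ℝ) < D := by
    rw [hD]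
    have h2 : 0 < v ^ 2 := pow_pos (abs_pos.mpr hvx) 2 |>.trans_le (by rw [sq_abs])
    positivity
  set N := s * (α * A1) * (1 - p) * v - s * A * (1 - p) * (c * (α * A1) * (1 - p) + α * B1 * -1 * p) with hNdef
  have hN : N = α * (p * (1 - p) * s * A1 * B1) := by
    rw [hNdef, hvdef, hAx, hBx]; ring
  have ht : (1:ℝ) + (s * A * (1 - p) / v) ^ 2 ≠ 0 := by positivity
  have hv2 : (1 + (s * A * (1 - p) / v) ^ 2) * v ^ 2 = D := by
    have hmul : (s * A * (1 - p) / v) ^ 2 * v ^ 2 = (s * A * (1 - p)) ^ 2 := by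
      rw [div_pow, div_mul_cancel₀ _ (pow_ne_zero 2 hvx)]
    rw [add_mul, one_mul, hmul, hD]; ring
  have e1 : 1 / (1 + (s * A * (1 - p) / v) ^ 2) * (N / v ^ 2) = N / D := by
    rw [div_mul_div_comm, one_mul, hv2]
  show p * (1 - p) * s * A1 * B1 / (π * D) = 1 / (α * π) * (1 / (1 + (s * A * (1 - p) / v) ^ 2) * (N / v ^ 2))
  rw [e1, hN]
  have hα' : α ≠ 0 := hα0.ne'
  have h1 : π * D ≠ 0 := by positivity
  have h2 : D * (α * π) ≠ 0 := by positivity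
  rw [one_div, inv_mul_eq_div, div_div, div_eq_div_iff h1 h2]
  ring
end

section
/- The function q(y) = (9/(2π))·y^{3/2}·(1-y)^{3/2}/(y³+(1-y)³)² on (0,1) is a probability density: it is nonnegative and ∫_0^1 q(y) dy = 1. -/
open Real Set Filter MeasureTheory

-- derivative lemmas
lemma Lsqrt {y : ℝ} (hy : y ∈ Set.Ioo (0:ℝ) 1) :
    HasDerivAt (fun y => Real.sqrt (y*(1-y))) ((1-2*y)/(2*Real.sqrt (y*(1-y)))) y := by
  obtain ⟨h0, h1⟩ := hy
  have ht : 0 < y*(1-y) := mul_pos h0 (by linarith)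
  have hinner : HasDerivAt (fun y : ℝ => y*(1-y)) (1-2*y) y := by
    have := (hasDerivAt_id y).mul ((hasDerivAt_const y (1:ℝ)).sub (hasDerivAt_id y))
    exact this.congr_deriv (by simp only [Pi.sub_apply, id]; ring)
  exact hinner.sqrt ht.ne'

lemma L1 {y : ℝ} (hy : y ∈ Set.Ioo (0:ℝ) 1) :
    HasDerivAt (fun y => arctan ((2*y-1)/(2*Real.sqrt (y*(1-y)))))
      (1/Real.sqrt (y*(1-y))) y := by
  obtain ⟨h0, h1⟩ := hy
  have ht : 0 < y*(1-y) := mul_pos h0 (by linarith)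
  set s := Real.sqrt (y*(1-y)) with hs
  have hspos : 0 < s := Real.sqrt_pos.mpr ht
  have hs2 : s^2 = y*(1-y) := Real.sq_sqrt ht.le
  have hnum : HasDerivAt (fun y : ℝ => 2*y-1) 2 y := by
    simpa using ((hasDerivAt_id y).const_mul (2:ℝ)).sub_const 1
  have hden : HasDerivAt (fun y => 2*Real.sqrt (y*(1-y))) (2*((1-2*y)/(2*s))) y :=
    (Lsqrt ⟨h0,h1⟩).const_mul 2
  have hg : HasDerivAt (fun y => (2*y-1)/(2*Real.sqrt (y*(1-y))))
      ((2*(2*s) - (2*y-1)*(2*((1-2*y)/(2*s))))/(2*s)^2) y :=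
    hnum.div hden (by positivity)
  have h := hg.arctan
  convert h using 1
  rw [← hs]
  field_simp
  ring_nf


lemma L2 {y : ℝ} (hy : y ∈ Set.Ioo (0:ℝ) 1) :
    HasDerivAt (fun y => arctan ((2*y-1)/Real.sqrt (y*(1-y))))
      (1/(2*Real.sqrt (y*(1-y))*(3*y^2-3*y+1))) y := by
  obtain ⟨h0, h1⟩ := hy
  have ht : 0 < y*(1-y) := mul_pos h0 (by linarith)
  set s := Real.sqrt (y*(1-y)) with hs
  have hspos : 0 < s := Real.sqrt_pos.mpr ht
  have hs2 : s^2 = y*(1-y) := Real.sq_sqrt ht.le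
  have hq : (0:ℝ) < 3*y^2-3*y+1 := by nlinarith
  have hnum : HasDerivAt (fun y : ℝ => 2*y-1) 2 y := by
    simpa using ((hasDerivAt_id y).const_mul (2:ℝ)).sub_const 1
  have hg : HasDerivAt (fun y => (2*y-1)/Real.sqrt (y*(1-y)))
      ((2*s - (2*y-1)*((1-2*y)/(2*s)))/s^2) y :=
    hnum.div (Lsqrt ⟨h0,h1⟩) hspos.ne'
  have h := hg.arctan
  convert h using 1
  rw [← hs]
  field_simp
  rw [div_eq_iff (by nlinarith)]
  linear_combination (1 - 4*(3*y*(y-1)+1)) * hs2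

lemma L3 {y : ℝ} (hy : y ∈ Set.Ioo (0:ℝ) 1) :
    HasDerivAt (fun y => (2*y-1)*Real.sqrt (y*(1-y))/(3*(3*y^2-3*y+1)))
      (-(1-5*(y*(1-y)))/(6*Real.sqrt (y*(1-y))*(3*y^2-3*y+1)^2)) y := by
  obtain ⟨h0, h1⟩ := hy
  have ht : 0 < y*(1-y) := mul_pos h0 (by linarith)
  set s := Real.sqrt (y*(1-y)) with hs
  have hspos : 0 < s := Real.sqrt_pos.mpr ht
  have hs2 : s^2 = y*(1-y) := Real.sq_sqrt ht.le
  have hq : (0:ℝ) < 3*y^2-3*y+1 := by nlinarith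
  have hnum : HasDerivAt (fun y : ℝ => 2*y-1) 2 y := by
    simpa using ((hasDerivAt_id y).const_mul (2:ℝ)).sub_const 1
  have hN : HasDerivAt (fun y => (2*y-1)*Real.sqrt (y*(1-y)))
      (2*s + (2*y-1)*((1-2*y)/(2*s))) y := hnum.mul (Lsqrt ⟨h0,h1⟩)
  have hD : HasDerivAt (fun y : ℝ => 3*(3*y^2-3*y+1)) (3*(3*(2*y)-3)) y := by
    have h1' : HasDerivAt (fun y : ℝ => 3*y^2-3*y+1) (3*(2*y)-3) y := by
      have := (((hasDerivAt_pow 2 y).const_mul (3:ℝ)).sub ((hasDerivAt_id y).const_mul 3)).add_const 1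
      exact this.congr_deriv (by norm_num)
    exact h1'.const_mul 3
  have hg : HasDerivAt (fun y => (2*y-1)*Real.sqrt (y*(1-y))/(3*(3*y^2-3*y+1)))
      (((2*s + (2*y-1)*((1-2*y)/(2*s)))*(3*(3*y^2-3*y+1)) - (2*y-1)*s*(3*(3*(2*y)-3)))/(3*(3*y^2-3*y+1))^2) y :=
    hN.div hD (by positivity)
  convert hg using 1
  field_simp
  have hD : (y*3*(y-1)+1)^2 ≠ 0 := by
    have : 0 < y*3*(y-1)+1 := by nlinarith
    positivity
  rw [← neg_div, div_left_inj' hD]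
  linear_combination (-6*(4*(y*3*(y-1)+1) - 6*(2*y-1)^2)) * hs2

noncomputable def F0 (y : ℝ) : ℝ :=
  (1/9) * arctan ((2*y-1)/(2*Real.sqrt (y*(1-y)))) +
  (1/9) * arctan ((2*y-1)/Real.sqrt (y*(1-y))) +
  (2*y-1)*Real.sqrt (y*(1-y))/(3*(3*y^2-3*y+1))

lemma Ldiff {y : ℝ} (hy : y ∈ Set.Ioo (0:ℝ) 1) :
    HasDerivAt F0 (y ^ ((3:ℝ)/2) * (1-y) ^ ((3:ℝ)/2) / (y^3+(1-y)^3)^2) y := by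
  obtain ⟨h0, h1⟩ := hy
  have ht : 0 < y*(1-y) := mul_pos h0 (by linarith)
  have hq : (0:ℝ) < 3*y^2-3*y+1 := by nlinarith
  set s := Real.sqrt (y*(1-y)) with hs
  have hspos : 0 < s := Real.sqrt_pos.mpr ht
  have hs2 : s^2 = y*(1-y) := Real.sq_sqrt ht.le
  have h := (((L1 ⟨h0,h1⟩).const_mul (1/9 : ℝ)).add ((L2 ⟨h0,h1⟩).const_mul (1/9 : ℝ))).add (L3 ⟨h0,h1⟩)
  refine h.congr_deriv ?_
  have hr : y ^ ((3:ℝ)/2) * (1-y) ^ ((3:ℝ)/2) = (y*(1-y)) * s := by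
    rw [← Real.mul_rpow h0.le (by linarith), show ((3:ℝ)/2) = 1 + 1/2 by norm_num,
      Real.rpow_add ht, Real.rpow_one, ← Real.sqrt_eq_rpow, hs]
  have hden : y^3+(1-y)^3 = 3*y^2-3*y+1 := by ring
  rw [hr, hden]
  rw [← hs]
  field_simp
  rw [hs2]
  have hD : 3*y*(y-1)+1 ≠ 0 := by nlinarith
  field_simp
  ring

lemma tendsto_sqrt_zero_right :
    Tendsto (fun y : ℝ => Real.sqrt (y*(1-y))) (nhdsWithin 0 (Set.Ioi 0)) (nhdsWithin 0 (Set.Ioi 0)) := by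
  rw [tendsto_nhdsWithin_iff]
  constructor
  · have : Tendsto (fun y : ℝ => Real.sqrt (y*(1-y))) (nhds 0) (nhds (Real.sqrt (0*(1-0)))) :=
      (Real.continuous_sqrt.comp (by continuity)).tendsto 0
    simpa using this.mono_left nhdsWithin_le_nhds
  · filter_upwards [Ioo_mem_nhdsGT_of_mem (by norm_num : (0:ℝ) ∈ Set.Ico 0 1)] with y hy
    exact Real.sqrt_pos.mpr (mul_pos hy.1 (by linarith [hy.2]))

lemma tendsto_sqrt_one_left :
    Tendsto (fun y : ℝ => Real.sqrt (y*(1-y))) (nhdsWithin 1 (Set.Iio 1)) (nhdsWithin 0 (Set.Ioi 0)) := by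
  rw [tendsto_nhdsWithin_iff]
  constructor
  · have : Tendsto (fun y : ℝ => Real.sqrt (y*(1-y))) (nhds 1) (nhds (Real.sqrt (1*(1-1)))) :=
      (Real.continuous_sqrt.comp (by continuity)).tendsto 1
    simpa using this.mono_left nhdsWithin_le_nhds
  · filter_upwards [Ioo_mem_nhdsLT_of_mem (by norm_num : (1:ℝ) ∈ Set.Ioc 0 1)] with y hy
    exact Real.sqrt_pos.mpr (mul_pos hy.1 (by linarith [hy.2]))

lemma tendsto_F0_zero : Tendsto F0 (nhdsWithin 0 (Set.Ioi 0)) (nhds (-(π/9))) := by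
  have hA : Tendsto (fun y : ℝ => 2*y-1) (nhdsWithin 0 (Set.Ioi 0)) (nhds (-1)) := by
    have : Tendsto (fun y : ℝ => 2*y-1) (nhds 0) (nhds (2*0-1)) := (by continuity : Continuous fun y : ℝ => 2*y-1).tendsto 0
    simpa using this.mono_left nhdsWithin_le_nhds
  have hB1 : Tendsto (fun y : ℝ => (2*Real.sqrt (y*(1-y)))⁻¹) (nhdsWithin 0 (Set.Ioi 0)) atTop := by
    apply tendsto_inv_nhdsGT_zero.comp
    rw [tendsto_nhdsWithin_iff]
    refine ⟨?_, ?_⟩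
    · have := tendsto_sqrt_zero_right.mono_right nhdsWithin_le_nhds
      simpa using this.const_mul 2
    · filter_upwards [tendsto_sqrt_zero_right.eventually_mem (self_mem_nhdsWithin)] with y hy
      have := Set.mem_Ioi.mp hy
      exact Set.mem_Ioi.mpr (by linarith)
  have hB2 : Tendsto (fun y : ℝ => (Real.sqrt (y*(1-y)))⁻¹) (nhdsWithin 0 (Set.Ioi 0)) atTop :=
    tendsto_inv_nhdsGT_zero.comp tendsto_sqrt_zero_right
  have hI1 : Tendsto (fun y : ℝ => (2*y-1)/(2*Real.sqrt (y*(1-y)))) (nhdsWithin 0 (Set.Ioi 0)) atBot := by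
    have := hA.neg_mul_atTop (by norm_num : (-1:ℝ) < 0) hB1
    simpa [div_eq_mul_inv] using this
  have hI2 : Tendsto (fun y : ℝ => (2*y-1)/(Real.sqrt (y*(1-y)))) (nhdsWithin 0 (Set.Ioi 0)) atBot := by
    have := hA.neg_mul_atTop (by norm_num : (-1:ℝ) < 0) hB2
    simpa [div_eq_mul_inv] using this
  have h1 : Tendsto (fun y : ℝ => arctan ((2*y-1)/(2*Real.sqrt (y*(1-y))))) (nhdsWithin 0 (Set.Ioi 0)) (nhds (-(π/2))) :=
    (tendsto_arctan_atBot.mono_right nhdsWithin_le_nhds).comp hI1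
  have h2 : Tendsto (fun y : ℝ => arctan ((2*y-1)/(Real.sqrt (y*(1-y))))) (nhdsWithin 0 (Set.Ioi 0)) (nhds (-(π/2))) :=
    (tendsto_arctan_atBot.mono_right nhdsWithin_le_nhds).comp hI2
  have h3 : Tendsto (fun y : ℝ => (2*y-1)*Real.sqrt (y*(1-y))/(3*(3*y^2-3*y+1))) (nhdsWithin 0 (Set.Ioi 0)) (nhds 0) := by
    have hc : Continuous (fun y : ℝ => (2*y-1)*Real.sqrt (y*(1-y))/(3*(3*y^2-3*y+1))) := by
      apply Continuous.div
      · exact (by continuity : Continuous fun y : ℝ => 2*y-1).mul (Real.continuous_sqrt.comp (by continuity))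
      · continuity
      · intro y; have : (0:ℝ) < 3*y^2-3*y+1 := by nlinarith [sq_nonneg (2*y-1)]
        positivity
    have := (hc.tendsto 0).mono_left (nhdsWithin_le_nhds (s := Set.Ioi (0:ℝ)))
    simpa using this
  have := (((h1.const_mul (1/9 : ℝ)).add (h2.const_mul (1/9 : ℝ))).add h3)
  unfold F0
  convert this using 1
  ring

lemma tendsto_F0_one : Tendsto F0 (nhdsWithin 1 (Set.Iio 1)) (nhds (π/9)) := by
  have hA : Tendsto (fun y : ℝ => 2*y-1) (nhdsWithin 1 (Set.Iio 1)) (nhds 1) := by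
    have h := ((by continuity : Continuous fun y : ℝ => 2*y-1).tendsto 1).mono_left
      (nhdsWithin_le_nhds (s := Set.Iio (1:ℝ)))
    norm_num at h
    exact h
  have hB1 : Tendsto (fun y : ℝ => (2*Real.sqrt (y*(1-y)))⁻¹) (nhdsWithin 1 (Set.Iio 1)) atTop := by
    apply tendsto_inv_nhdsGT_zero.comp
    rw [tendsto_nhdsWithin_iff]
    refine ⟨?_, ?_⟩
    · have := tendsto_sqrt_one_left.mono_right nhdsWithin_le_nhds
      simpa using this.const_mul 2
    · filter_upwards [tendsto_sqrt_one_left.eventually_mem (self_mem_nhdsWithin)] with y hy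
      have := Set.mem_Ioi.mp hy
      exact Set.mem_Ioi.mpr (by linarith)
  have hB2 : Tendsto (fun y : ℝ => (Real.sqrt (y*(1-y)))⁻¹) (nhdsWithin 1 (Set.Iio 1)) atTop :=
    tendsto_inv_nhdsGT_zero.comp tendsto_sqrt_one_left
  have hI1 : Tendsto (fun y : ℝ => (2*y-1)/(2*Real.sqrt (y*(1-y)))) (nhdsWithin 1 (Set.Iio 1)) atTop := by
    have := hA.pos_mul_atTop (by norm_num : (0:ℝ) < 1) hB1
    simpa [div_eq_mul_inv] using this
  have hI2 : Tendsto (fun y : ℝ => (2*y-1)/(Real.sqrt (y*(1-y)))) (nhdsWithin 1 (Set.Iio 1)) atTop := by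
    have := hA.pos_mul_atTop (by norm_num : (0:ℝ) < 1) hB2
    simpa [div_eq_mul_inv] using this
  have h1 : Tendsto (fun y : ℝ => arctan ((2*y-1)/(2*Real.sqrt (y*(1-y))))) (nhdsWithin 1 (Set.Iio 1)) (nhds (π/2)) :=
    (tendsto_arctan_atTop.mono_right nhdsWithin_le_nhds).comp hI1
  have h2 : Tendsto (fun y : ℝ => arctan ((2*y-1)/(Real.sqrt (y*(1-y))))) (nhdsWithin 1 (Set.Iio 1)) (nhds (π/2)) :=
    (tendsto_arctan_atTop.mono_right nhdsWithin_le_nhds).comp hI2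
  have h3 : Tendsto (fun y : ℝ => (2*y-1)*Real.sqrt (y*(1-y))/(3*(3*y^2-3*y+1))) (nhdsWithin 1 (Set.Iio 1)) (nhds 0) := by
    have hc : Continuous (fun y : ℝ => (2*y-1)*Real.sqrt (y*(1-y))/(3*(3*y^2-3*y+1))) := by
      apply Continuous.div
      · exact (by continuity : Continuous fun y : ℝ => 2*y-1).mul (Real.continuous_sqrt.comp (by continuity))
      · continuity
      · intro y; have : (0:ℝ) < 3*y^2-3*y+1 := by nlinarith [sq_nonneg (2*y-1)]
        positivity
    have := (hc.tendsto 1).mono_left (nhdsWithin_le_nhds (s := Set.Iio (1:ℝ)))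
    simpa using this
  have := (((h1.const_mul (1/9 : ℝ)).add (h2.const_mul (1/9 : ℝ))).add h3)
  unfold F0
  convert this using 1
  ring


theorem stmt_9 :
    (∀ y ∈ Set.Ioo (0:ℝ) 1, 0 ≤
      (9 / (2 * π)) * y ^ ((3:ℝ)/2) * (1 - y) ^ ((3:ℝ)/2) /
        (y ^ 3 + (1 - y) ^ 3) ^ 2) ∧
    ∫ y in (0:ℝ)..1,
      (9 / (2 * π)) * y ^ ((3:ℝ)/2) * (1 - y) ^ ((3:ℝ)/2) /
        (y ^ 3 + (1 - y) ^ 3) ^ 2 = 1 := by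
  have hπ : (0:ℝ) < π := Real.pi_pos
  constructor
  · intro y hy
    obtain ⟨h0, h1⟩ := hy
    have h2 : (0:ℝ) < 1 - y := by linarith
    have hq : (0:ℝ) < (y ^ 3 + (1 - y) ^ 3) ^ 2 := by positivity
    have hn : (0:ℝ) ≤ (9 / (2 * π)) * y ^ ((3:ℝ)/2) * (1 - y) ^ ((3:ℝ)/2) := by positivity
    exact div_nonneg hn hq.le
  · have hrp : Continuous (fun x : ℝ => x ^ ((3:ℝ)/2)) :=
      continuous_iff_continuousAt.mpr fun x => Real.continuousAt_rpow_const x _ (Or.inr (by norm_num))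
    have hc : Continuous (fun y : ℝ =>
        (9 / (2 * π)) * y ^ ((3:ℝ)/2) * (1 - y) ^ ((3:ℝ)/2) / (y ^ 3 + (1 - y) ^ 3) ^ 2) := by
      apply Continuous.div
      · exact (continuous_const.mul hrp).mul (hrp.comp (by continuity))
      · continuity
      · intro y
        have : (0:ℝ) < y^3+(1-y)^3 := by nlinarith [sq_nonneg (2*y-1)]
        positivity
    have hderiv : ∀ y ∈ Set.Ioo (0:ℝ) 1, HasDerivAt (fun y => (9/(2*π)) * F0 y)
        ((9 / (2 * π)) * y ^ ((3:ℝ)/2) * (1 - y) ^ ((3:ℝ)/2) / (y ^ 3 + (1 - y) ^ 3) ^ 2) y := by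
      intro y hy
      have := (Ldiff hy).const_mul (9/(2*π))
      refine this.congr_deriv ?_
      ring
    have hval0 : (9/(2*π)) * (-(π/9)) = (-(1/2) : ℝ) := by
      field_simp
    have hval1 : (9/(2*π)) * (π/9) = ((1/2) : ℝ) := by
      field_simp
    have ha : Tendsto (fun y => (9/(2*π)) * F0 y) (nhdsWithin 0 (Set.Ioi 0)) (nhds (-(1/2) : ℝ)) :=
      hval0 ▸ tendsto_F0_zero.const_mul (9/(2*π))
    have hb : Tendsto (fun y => (9/(2*π)) * F0 y) (nhdsWithin 1 (Set.Iio 1)) (nhds ((1/2) : ℝ)) :=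
      hval1 ▸ tendsto_F0_one.const_mul (9/(2*π))
    rw [intervalIntegral.integral_eq_sub_of_hasDerivAt_of_tendsto (by norm_num) hderiv
      (hc.intervalIntegrable 0 1) ha hb]
    norm_num
end

section
/- Let η be a probability measure on ℝ₊ with ∫ x^α dη(x) < ∞ for α ∈ (0,1), and suppose t > 0 is such that ∫ |t-x|^{α-1} dη(x) < ∞. Then the map y ↦ ∫_{ℝ₊} |y-x|^{α-1} dη(x) is integrable on (0,t) with respect to Lebesgue measure. -/
open Real MeasureTheory

theorem key0 (α : ℝ) (hα : α ∈ Set.Ioo (0:ℝ) 1) (b : ℝ) (hb : 0 ≤ b) (c : ℝ) :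
    ∫⁻ y in Set.Ioo c (c + b), ENNReal.ofReal ((y - c) ^ (α - 1)) =
      ENNReal.ofReal (b ^ α / α) := by
  have hr : (-1:ℝ) < α - 1 := by linarith [hα.1]
  have hc : c ≤ c + b := by linarith
  have hInt : IntegrableOn (fun y => (y - c) ^ (α - 1)) (Set.Ioo c (c + b)) volume := by
    have := (intervalIntegral.intervalIntegrable_rpow' (a := 0) (b := b) hr).comp_sub_right c
    simp only [zero_add] at this
    exact this.def'.mono_set (by rw [Set.uIoc_of_le (show c ≤ b + c by linarith), add_comm b c]; exact Set.Ioo_subset_Ioc_self)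
  rw [← ofReal_integral_eq_lintegral_ofReal hInt ?nn]
  case nn =>
    filter_upwards [self_mem_ae_restrict measurableSet_Ioo] with y hy
    exact Real.rpow_nonneg (by linarith [hy.1]) _
  congr 1
  rw [← MeasureTheory.integral_Ioc_eq_integral_Ioo, ← intervalIntegral.integral_of_le hc,
    intervalIntegral.integral_comp_sub_right (fun u => u ^ (α - 1)) c]
  simp only [sub_self, add_sub_cancel_left]
  rw [integral_rpow (Or.inl hr)]
  rw [Real.zero_rpow (by linarith [hα.1] : α - 1 + 1 ≠ 0)]
  ring_nf

theorem key0' (α : ℝ) (hα : α ∈ Set.Ioo (0:ℝ) 1) (b : ℝ) (hb : 0 ≤ b) (c : ℝ) :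
    ∫⁻ y in Set.Ioo (c - b) c, ENNReal.ofReal ((c - y) ^ (α - 1)) =
      ENNReal.ofReal (b ^ α / α) := by
  have hr : (-1:ℝ) < α - 1 := by linarith [hα.1]
  have hc : c - b ≤ c := by linarith
  have hInt : IntegrableOn (fun y => (c - y) ^ (α - 1)) (Set.Ioo (c - b) c) volume := by
    have := ((intervalIntegral.intervalIntegrable_rpow' (a := 0) (b := b) hr).comp_sub_left c).symm
    simp only [sub_zero] at this
    exact this.def'.mono_set (by rw [Set.uIoc_of_le hc]; exact Set.Ioo_subset_Ioc_self)
  rw [← ofReal_integral_eq_lintegral_ofReal hInt ?nn]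
  case nn =>
    filter_upwards [self_mem_ae_restrict measurableSet_Ioo] with y hy
    exact Real.rpow_nonneg (by linarith [hy.2]) _
  congr 1
  rw [← MeasureTheory.integral_Ioc_eq_integral_Ioo, ← intervalIntegral.integral_of_le hc,
    intervalIntegral.integral_comp_sub_left (fun u => u ^ (α - 1)) c]
  simp only [sub_self, sub_sub_cancel]
  rw [integral_rpow (Or.inl hr)]
  rw [Real.zero_rpow (by linarith [hα.1] : α - 1 + 1 ≠ 0)]
  ring_nf

theorem keyx (α : ℝ) (hα : α ∈ Set.Ioo (0:ℝ) 1) (t : ℝ) (ht : 0 < t) (x : ℝ) (hx : 0 ≤ x) :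
    ∫⁻ y in Set.Ioo 0 t, ENNReal.ofReal (|y - x| ^ (α - 1)) ≤
      ENNReal.ofReal ((x ^ α + t ^ α) / α) := by
  have hα0 := hα.1
  set A : Set ℝ := Set.Ioo 0 t ∩ Set.Iio x with hA
  set B : Set ℝ := Set.Ioo 0 t ∩ Set.Ici x with hB
  have hsplit : Set.Ioo 0 t = A ∪ B := by
    rw [hA, hB, ← Set.inter_union_distrib_left, Set.Iio_union_Ici, Set.inter_univ]
  have hKey0 : ∫⁻ y in Set.Ico x (x + t), ENNReal.ofReal ((y - x) ^ (α - 1)) =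
      ENNReal.ofReal (t ^ α / α) := by
    rw [← setLIntegral_congr MeasureTheory.Ioo_ae_eq_Ico]
    exact key0 α hα t ht.le x
  calc ∫⁻ y in Set.Ioo 0 t, ENNReal.ofReal (|y - x| ^ (α - 1))
      = (∫⁻ y in A, ENNReal.ofReal (|y - x| ^ (α - 1)))
        + ∫⁻ y in B, ENNReal.ofReal (|y - x| ^ (α - 1)) := by
        rw [hsplit, lintegral_union (measurableSet_Ioo.inter measurableSet_Ici)
          (Set.disjoint_left.2 fun y hy hy2 => absurd hy2.2 (not_le.2 hy.2))]
    _ = (∫⁻ y in A, ENNReal.ofReal ((x - y) ^ (α - 1)))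
        + ∫⁻ y in B, ENNReal.ofReal ((y - x) ^ (α - 1)) := by
        congr 1
        · refine setLIntegral_congr_fun (measurableSet_Ioo.inter measurableSet_Iio)
            (fun y hy => ?_)
          obtain ⟨hy1, hy2⟩ := hy
          rw [abs_sub_comm, abs_of_pos (by linarith [Set.mem_Iio.1 hy2] : (0:ℝ) < x - y)]
        · refine setLIntegral_congr_fun (measurableSet_Ioo.inter measurableSet_Ici)
            (fun y hy => ?_)
          obtain ⟨hy1, hy2⟩ := hy
          rw [abs_of_nonneg (by linarith [Set.mem_Ici.1 hy2] : (0:ℝ) ≤ y - x)]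
    _ ≤ (∫⁻ y in Set.Ioo (x - x) x, ENNReal.ofReal ((x - y) ^ (α - 1)))
        + ∫⁻ y in Set.Ico x (x + t), ENNReal.ofReal ((y - x) ^ (α - 1)) := by
        gcongr
        · exact fun y hy => ⟨by linarith [hy.1.1], hy.2⟩
        · exact fun y hy => ⟨hy.2, by linarith [hy.1.2]⟩
    _ = ENNReal.ofReal (x ^ α / α) + ENNReal.ofReal (t ^ α / α) := by
        rw [key0' α hα x hx x, hKey0]
    _ = ENNReal.ofReal ((x ^ α + t ^ α) / α) := by
        rw [← ENNReal.ofReal_add (div_nonneg (Real.rpow_nonneg hx α) hα0.le)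
          (div_nonneg (Real.rpow_nonneg ht.le α) hα0.le)]
        ring_nf

theorem stmt_12 (η : Measure ℝ) [IsProbabilityMeasure η] (hsupp : η (Set.Iio 0) = 0)
    (α : ℝ) (hα : α ∈ Set.Ioo (0:ℝ) 1)
    (hmom : Integrable (fun x => x ^ α) η)
    (t : ℝ) (ht : 0 < t)
    (hint : Integrable (fun x => |t - x| ^ (α - 1)) η) :
    IntegrableOn (fun y => ∫ x, |y - x| ^ (α - 1) ∂η) (Set.Ioo 0 t) volume := by
  have hα0 := hα.1
  have hker : Measurable (Function.uncurry fun y x : ℝ => ENNReal.ofReal (|y - x| ^ (α - 1))) := by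
    unfold Function.uncurry; fun_prop
  have hfy : ∀ y : ℝ, (∫ x, |y - x| ^ (α - 1) ∂η)
      = (∫⁻ x, ENNReal.ofReal (|y - x| ^ (α - 1)) ∂η).toReal := by
    intro y
    refine integral_eq_lintegral_of_nonneg_ae
      (ae_of_all _ fun x => Real.rpow_nonneg (abs_nonneg _) _) ?_
    apply Measurable.aestronglyMeasurable; fun_prop
  have hgm : Measurable fun y => (∫⁻ x, ENNReal.ofReal (|y - x| ^ (α - 1)) ∂η).toReal :=
    (Measurable.lintegral_prod_right hker).ennreal_toReal
  have hae : ∀ᵐ x ∂η, 0 ≤ x := by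
    rw [ae_iff]
    simpa [not_le] using (show η {a | a < 0} = 0 from hsupp)
  constructor
  · rw [show (fun y => ∫ x, |y - x| ^ (α - 1) ∂η)
        = fun y => (∫⁻ x, ENNReal.ofReal (|y - x| ^ (α - 1)) ∂η).toReal from funext hfy]
    exact hgm.aestronglyMeasurable.restrict
  · rw [hasFiniteIntegral_iff_norm]
    have hb1 : ∀ y : ℝ, ENNReal.ofReal ‖∫ x, |y - x| ^ (α - 1) ∂η‖
        ≤ ∫⁻ x, ENNReal.ofReal (|y - x| ^ (α - 1)) ∂η := by
      intro y
      rw [hfy y, Real.norm_of_nonneg ENNReal.toReal_nonneg]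
      exact ENNReal.ofReal_toReal_le
    calc ∫⁻ y in Set.Ioo 0 t, ENNReal.ofReal ‖∫ x, |y - x| ^ (α - 1) ∂η‖
        ≤ ∫⁻ y in Set.Ioo 0 t, ∫⁻ x, ENNReal.ofReal (|y - x| ^ (α - 1)) ∂η :=
          lintegral_mono fun y => hb1 y
      _ = ∫⁻ x, (∫⁻ y in Set.Ioo 0 t, ENNReal.ofReal (|y - x| ^ (α - 1))) ∂η :=
          lintegral_lintegral_swap (by apply Measurable.aemeasurable; unfold Function.uncurry; fun_prop)
      _ ≤ ∫⁻ x, ENNReal.ofReal ((x ^ α + t ^ α) / α) ∂η := by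
          refine lintegral_mono_ae ?_
          filter_upwards [hae] with x hx
          exact keyx α hα t ht x hx
      _ < ⊤ := by
          have hB : Integrable (fun x => (x ^ α + t ^ α) / α) η :=
            (hmom.add (integrable_const _)).div_const α
          exact hB.lintegral_lt_top
end

section
/- Let η be a probability measure on ℝ₊, α ∈ (0,1), and y > 0 such that η({y}) = 0 and ∫ |y-x|^{α-1} dη(x) < ∞. Then the function G(s) = ∫_{(0,s)} (s-x)^α dη(x) is differentiable at s = y with G'(y) = α·∫_{(0,y)} (y-x)^{α-1} dη(x), provided the distribution function Ψ(t) = η((-∞,t]) is Lipschitz of order 1 at y. -/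
open Real MeasureTheory

lemma bern_aux {α a b : ℝ} (hα0 : 0 ≤ α) (hα1 : α ≤ 1) (hb : 0 < b) (hab : b ≤ a) :
    a ^ α - b ^ α ≤ α * b ^ (α - 1) * (a - b) := by
  have ha : 0 < a := hb.trans_le hab
  have hs : (0:ℝ) ≤ (a - b) / b := div_nonneg (by linarith) hb.le
  have h := rpow_one_add_le_one_add_mul_self (s := (a - b) / b) (by linarith) hα0 hα1
  have h1 : 1 + (a - b) / b = a / b := by field_simp; ring
  rw [h1, Real.div_rpow ha.le hb.le] at h
  have hbα : 0 < b ^ α := Real.rpow_pos_of_pos hb α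
  have h2 := (div_le_iff₀ hbα).mp h
  have h3 : b ^ (α - 1) = b ^ α / b := Real.rpow_sub_one hb.ne' α
  rw [h3]
  have : α * (b ^ α / b) * (a - b) = (α * ((a - b) / b)) * b ^ α := by
    field_simp
  rw [this]
  nlinarith [hbα]

lemma quot_bound {α y x : ℝ} (hα0 : 0 < α) (hα1 : α < 1) (hxy : x < y) (s : ℝ) (hs : s ≠ y) :
    |(max (s - x) 0 ^ α - max (y - x) 0 ^ α) / (s - y)| ≤ 2 * (y - x) ^ (α - 1) := by
  have hyx : 0 < y - x := by linarith
  have hmy : max (y - x) 0 = y - x := max_eq_left hyx.le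
  have hb : 0 < (y - x) ^ (α - 1) := Real.rpow_pos_of_pos hyx _
  have hbα : 0 < (y - x) ^ α := Real.rpow_pos_of_pos hyx _
  have hpow : (y - x) ^ (α - 1) = (y - x) ^ α / (y - x) := Real.rpow_sub_one hyx.ne' α
  rw [hmy]
  rcases lt_or_gt_of_ne hs with hsy | hsy
  · -- s < y
    have hys : 0 < y - s := by linarith
    have habs : |s - y| = y - s := by rw [abs_sub_comm]; exact abs_of_pos hys
    rw [abs_div, habs]
    rcases le_or_gt s x with hsx | hsx
    · -- s ≤ x : max (s-x) 0 = 0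
      have h0 : max (s - x) 0 = 0 := max_eq_right (by linarith)
      rw [h0, Real.zero_rpow hα0.ne']
      have : |0 - (y - x) ^ α| = (y - x) ^ α := by
        rw [zero_sub, abs_neg, abs_of_pos hbα]
      rw [this]
      have hle : (y - x) ^ α / (y - s) ≤ (y - x) ^ α / (y - x) :=
        div_le_div_of_nonneg_left hbα.le hyx (by linarith)
      rw [← hpow] at hle
      linarith
    · -- x < s < y
      have hsx' : 0 < s - x := by linarith
      have hms : max (s - x) 0 = s - x := max_eq_left hsx'.le
      rw [hms]
      have hmono : (s - x) ^ α ≤ (y - x) ^ α :=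
        Real.rpow_le_rpow hsx'.le (by linarith) hα0.le
      have habs2 : |(s - x) ^ α - (y - x) ^ α| = (y - x) ^ α - (s - x) ^ α := by
        rw [abs_sub_comm]; exact abs_of_nonneg (by linarith)
      rw [habs2]
      rcases le_or_gt (y - s) ((y - x) / 2) with h2 | h2
      · -- MVT / Bernoulli case
        have hkey := bern_aux hα0.le hα1.le hsx' (b := s - x) (a := y - x) (by linarith)
        have hab' : (y - x) - (s - x) = y - s := by ring
        rw [hab'] at hkey
        -- (s-x)^(α-1) ≤ 2 * (y-x)^(α-1)
        have hd : (s - x) ^ (α - 1) ≤ ((y - x) / 2) ^ (α - 1) :=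
          Real.rpow_le_rpow_of_nonpos (by linarith) (by linarith) (by linarith)
        have hdd : ((y - x) / 2) ^ (α - 1) = (y - x) ^ (α - 1) / 2 ^ (α - 1) :=
          Real.div_rpow hyx.le (by norm_num) _
        have h2e : (1:ℝ) / 2 ≤ 2 ^ (α - 1) := by
          have := Real.rpow_le_rpow_of_exponent_le (x := 2) one_le_two (y := -1) (z := α - 1)
            (by linarith)
          rwa [Real.rpow_neg_one, ← one_div] at this
        have h2p : (0:ℝ) < 2 ^ (α - 1) := Real.rpow_pos_of_pos two_pos _
        have hd2 : (y - x) ^ (α - 1) / 2 ^ (α - 1) ≤ (y - x) ^ (α - 1) / (1 / 2) :=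
          div_le_div_of_nonneg_left hb.le (by norm_num) h2e
        have hd3 : (y - x) ^ (α - 1) / (1 / 2) = 2 * (y - x) ^ (α - 1) := by ring
        have hfin : (s - x) ^ (α - 1) ≤ 2 * (y - x) ^ (α - 1) := by
          rw [← hd3]; exact hd.trans (hdd ▸ hd2)
        rw [div_le_iff₀ hys]
        have hsxp : 0 < (s - x) ^ (α - 1) := Real.rpow_pos_of_pos hsx' _
        have hA : α * (s - x) ^ (α - 1) ≤ 2 * (y - x) ^ (α - 1) := by nlinarith
        calc (y - x) ^ α - (s - x) ^ α ≤ α * (s - x) ^ (α - 1) * (y - s) := hkey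
          _ ≤ 2 * (y - x) ^ (α - 1) * (y - s) := mul_le_mul_of_nonneg_right hA hys.le
      · -- crude case
        have hcrude : (y - x) ^ α - (s - x) ^ α ≤ (y - x) ^ α := by
          have : 0 ≤ (s - x) ^ α := Real.rpow_nonneg hsx'.le _
          linarith
        rw [div_le_iff₀ hys]
        have : 2 * (y - x) ^ (α - 1) * (y - s) = 2 * ((y - x) ^ α / (y - x)) * (y - s) := by
          rw [hpow]
        rw [this]
        have hq : (y - x) ^ α = ((y - x) ^ α / (y - x)) * (y - x) := by
          field_simp
        nlinarith [div_pos hbα hyx]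
  · -- y < s
    have hsy' : 0 < s - y := by linarith
    have hsx : 0 < s - x := by linarith
    have hms : max (s - x) 0 = s - x := max_eq_left hsx.le
    rw [hms, abs_div, abs_of_pos hsy']
    have hmono : (y - x) ^ α ≤ (s - x) ^ α :=
      Real.rpow_le_rpow hyx.le (by linarith) hα0.le
    rw [abs_of_nonneg (by linarith)]
    have hkey := bern_aux hα0.le hα1.le hyx (b := y - x) (a := s - x) (by linarith)
    have hab' : (s - x) - (y - x) = s - y := by ring
    rw [hab'] at hkey
    rw [div_le_iff₀ hsy']
    nlinarith

theorem stmt_13 (η : Measure ℝ) [IsProbabilityMeasure η] (hsupp : η (Set.Iio 0) = 0)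
    (α : ℝ) (hα : α ∈ Set.Ioo (0:ℝ) 1) (y : ℝ) (hy : 0 < y)
    (hatom : η {y} = 0)
    (hint : Integrable (fun x => |y - x| ^ (α - 1)) η)
    -- the distribution function is Lipschitz of order 1 at `y`:
    (hLip : ∃ C > (0:ℝ), ∃ ε > (0:ℝ), ∀ s, |s - y| < ε →
      |(η (Set.Iic s)).toReal - (η (Set.Iic y)).toReal| ≤ C * |s - y|) :
    HasDerivAt (fun s => ∫ x in Set.Ioo 0 s, (s - x) ^ α ∂η)
      (α * ∫ x in Set.Ioo 0 y, (y - x) ^ (α - 1) ∂η) y := by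
  obtain ⟨hα0, hα1⟩ := hα
  obtain ⟨C, hC, ε, hε, hLip⟩ := hLip
  have hαne : α ≠ 0 := ne_of_gt hα0
  set φ : ℝ → ℝ → ℝ := fun s x => max (s - x) 0 ^ α with hφ
  have hcont : ∀ s, Continuous (φ s) := by
    intro s
    apply Continuous.rpow_const ((continuous_const.sub continuous_id).max continuous_const)
    intro x; exact Or.inr hα0.le
  have haes : ∀ᵐ x ∂η, 0 ≤ x := by
    rw [ae_iff]
    convert hsupp using 2
    ext x; simp [not_le]
  have hIntφ : ∀ s (T : Set ℝ), IntegrableOn (φ s) T η := by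
    intro s T
    refine Integrable.mono' (integrable_const (max s 0 ^ α)) (hcont s).aestronglyMeasurable ?_
    refine ae_restrict_of_ae (haes.mono fun x hx => ?_)
    rw [Real.norm_eq_abs, abs_of_nonneg (Real.rpow_nonneg (le_max_right _ _) _)]
    exact Real.rpow_le_rpow (le_max_right _ _)
      (max_le_max (by linarith) le_rfl) hα0.le
  set A : ℝ → ℝ := fun s => ∫ x in Set.Ioo 0 y, φ s x ∂η with hA_def
  set B : ℝ → ℝ := fun s => ∫ x in Set.Ici y, φ s x ∂η with hB_def
  -- integrable bound
  have hBd : IntegrableOn (fun x => 2 * (y - x) ^ (α - 1)) (Set.Ioo 0 y) η := by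
    have h1 : IntegrableOn (fun x => |y - x| ^ (α - 1)) (Set.Ioo 0 y) η := hint.integrableOn
    have h2 : IntegrableOn (fun x => (y - x) ^ (α - 1)) (Set.Ioo 0 y) η := by
      refine h1.congr_fun (fun x hx => ?_) measurableSet_Ioo
      dsimp only; rw [abs_of_pos (by linarith [hx.2] : (0:ℝ) < y - x)]
    exact h2.const_mul 2
  -- derivative of A
  have hA : HasDerivAt A (∫ x in Set.Ioo 0 y, α * (y - x) ^ (α - 1) ∂η) y := by
    rw [hasDerivAt_iff_tendsto_slope]
    have key : Filter.Tendsto (fun s => ∫ x in Set.Ioo 0 y, (φ s x - φ y x) / (s - y) ∂η)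
        (nhdsWithin y {y}ᶜ) (nhds (∫ x in Set.Ioo 0 y, α * (y - x) ^ (α - 1) ∂η)) := by
      refine tendsto_integral_filter_of_dominated_convergence
        (fun x => 2 * (y - x) ^ (α - 1)) ?_ ?_ hBd ?_
      · exact Filter.Eventually.of_forall fun s =>
          (((hcont s).sub (hcont y)).div_const _).aestronglyMeasurable
      · filter_upwards [self_mem_nhdsWithin] with s hs
        rw [MeasureTheory.ae_restrict_iff' measurableSet_Ioo]
        exact Filter.Eventually.of_forall fun x hx => quot_bound hα0 hα1 hx.2 s hs
      · rw [MeasureTheory.ae_restrict_iff' measurableSet_Ioo]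
        refine Filter.Eventually.of_forall fun x hx => ?_
        have hyx : 0 < y - x := by linarith [hx.2]
        have hD1 : HasDerivAt (fun s : ℝ => (s - x) ^ α) (1 * α * (y - x) ^ (α - 1)) y :=
          HasDerivAt.rpow_const ((hasDerivAt_id y).sub_const x) (Or.inl (by simp; exact hyx.ne'))
        have hev : (fun s => φ s x) =ᶠ[nhds y] (fun s : ℝ => (s - x) ^ α) := by
          filter_upwards [eventually_gt_nhds (show x < y from hx.2)] with s hsx
          simp only [hφ]
          rw [max_eq_left (by linarith : (0:ℝ) ≤ s - x)]
        have hD : HasDerivAt (fun s => φ s x) (α * (y - x) ^ (α - 1)) y := by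
          have := hD1.congr_of_eventuallyEq hev
          rwa [one_mul] at this
        have := hasDerivAt_iff_tendsto_slope.mp hD
        refine this.congr fun s => ?_
        rw [slope_def_field]
    refine key.congr' ?_
    filter_upwards [self_mem_nhdsWithin] with s hs
    have hsub : A s - A y = ∫ x in Set.Ioo 0 y, (φ s x - φ y x) ∂η :=
      (integral_sub (hIntφ s _) (hIntφ y _)).symm
    rw [slope_def_field, hsub, ← integral_div]
  -- B s = 0 for s ≤ y
  have hB0 : ∀ s, s ≤ y → B s = 0 := by
    intro s hs
    have : ∀ x ∈ Set.Ici y, φ s x = 0 := by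
      intro x hx
      simp only [hφ]
      rw [max_eq_right (by simp at hx; linarith), Real.zero_rpow hαne]
    calc B s = ∫ x in Set.Ici y, (0:ℝ) ∂η := setIntegral_congr_fun measurableSet_Ici this
      _ = 0 := by simp
  -- derivative of B
  have hB : HasDerivAt B 0 y := by
    rw [hasDerivAt_iff_tendsto_slope]
    have hev : ∀ᶠ s in nhdsWithin y {y}ᶜ, |s - y| < ε := by
      apply Filter.Eventually.filter_mono nhdsWithin_le_nhds
      filter_upwards [Metric.ball_mem_nhds y hε] with s hs
      rwa [Metric.mem_ball, Real.dist_eq] at hs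
    refine squeeze_zero_norm' (a := fun s => 2 * C * |s - y| ^ α) ?_ ?_
    · filter_upwards [hev, self_mem_nhdsWithin] with s hsε hsne
      have hrhs : 0 ≤ 2 * C * |s - y| ^ α := by positivity
      rcases le_or_gt s y with hsy | hsy
      · rw [slope_def_field, hB0 s hsy, hB0 y le_rfl]
        simpa using hrhs
      · -- y < s
        have hsy' : 0 < s - y := by linarith
        have hBnn : 0 ≤ B s :=
          setIntegral_nonneg measurableSet_Ici fun x _ => Real.rpow_nonneg (le_max_right _ _) _
        -- upper bound for B s
        have hmono : B s ≤ ∫ x in Set.Ici y, (Set.Iio s).indicator (fun _ => (s - y) ^ α) x ∂η := by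
          refine setIntegral_mono_on (hIntφ s _) ?_ measurableSet_Ici ?_
          · exact (integrable_const _).indicator measurableSet_Iio
          · intro x hx
            simp only [Set.mem_Ici] at hx
            by_cases hxs : x < s
            · rw [Set.indicator_of_mem (Set.mem_Iio.mpr hxs) _]
              simp only [hφ]
              rcases le_or_gt (s - x) 0 with h | h
              · rw [max_eq_right h, Real.zero_rpow hαne]
                exact Real.rpow_nonneg (by linarith) _
              · rw [max_eq_left h.le]
                exact Real.rpow_le_rpow h.le (by linarith) hα0.le
            · rw [Set.indicator_of_notMem (by simpa using hxs) _]
              simp only [hφ]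
              rw [max_eq_right (by simp at hxs; linarith), Real.zero_rpow hαne]
        have hind : ∫ x in Set.Ici y, (Set.Iio s).indicator (fun _ => (s - y) ^ α) x ∂η
            = (η (Set.Ici y ∩ Set.Iio s)).toReal * (s - y) ^ α := by
          rw [setIntegral_indicator measurableSet_Iio, setIntegral_const, smul_eq_mul, Measure.real]
        -- measure bound
        have hmeas : (η (Set.Ici y ∩ Set.Iio s)).toReal ≤ 2 * C * (s - y) := by
          have hsub2 : Set.Ici y ∩ Set.Iio s ⊆ Set.Ioc (2 * y - s) s := by
            rintro x ⟨hx2, hx1⟩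
            simp only [Set.mem_Iio] at hx1
            simp only [Set.mem_Ici] at hx2
            exact ⟨by linarith, by linarith⟩
          have h1 : (η (Set.Ici y ∩ Set.Iio s)).toReal ≤ (η (Set.Ioc (2 * y - s) s)).toReal :=
            ENNReal.toReal_mono (measure_ne_top η _) (measure_mono hsub2)
          have hadd : η (Set.Iic (2 * y - s)) + η (Set.Ioc (2 * y - s) s) = η (Set.Iic s) := by
            rw [← measure_union (Set.Iic_disjoint_Ioc le_rfl) measurableSet_Ioc,
              Set.Iic_union_Ioc_eq_Iic (by linarith)]
          have htr : (η (Set.Iic (2 * y - s))).toReal + (η (Set.Ioc (2 * y - s) s)).toReal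
              = (η (Set.Iic s)).toReal := by
            rw [← ENNReal.toReal_add (measure_ne_top η _) (measure_ne_top η _), hadd]
          have hl1 := hLip s hsε
          have hl2 := hLip (2 * y - s) (by rw [show 2 * y - s - y = -(s - y) by ring, abs_neg]; exact hsε)
          rw [show 2 * y - s - y = -(s - y) by ring, abs_neg, abs_of_pos hsy'] at hl2
          rw [abs_of_pos hsy'] at hl1
          have := abs_le.mp hl1
          have := abs_le.mp hl2
          linarith [abs_le.mp hl1, abs_le.mp hl2]
        -- combine
        have hBle : B s ≤ 2 * C * (s - y) * (s - y) ^ α := by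
          calc B s ≤ _ := hmono
            _ = (η (Set.Ici y ∩ Set.Iio s)).toReal * (s - y) ^ α := hind
            _ ≤ 2 * C * (s - y) * (s - y) ^ α := by
                exact mul_le_mul_of_nonneg_right hmeas (Real.rpow_nonneg hsy'.le _)
        rw [slope_def_field, hB0 y le_rfl, sub_zero, Real.norm_eq_abs, abs_div,
          abs_of_nonneg hBnn]
        simp only [abs_of_pos hsy']
        rw [div_le_iff₀ hsy']
        calc B s ≤ 2 * C * (s - y) * (s - y) ^ α := hBle
          _ = 2 * C * (s - y) ^ α * (s - y) := by ring
    · -- tendsto of the bound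
      have h1 : Filter.Tendsto (fun s : ℝ => |s - y|) (nhdsWithin y {y}ᶜ) (nhds 0) := by
        apply Filter.Tendsto.mono_left ?_ nhdsWithin_le_nhds
        have : Filter.Tendsto (fun s : ℝ => |s - y|) (nhds y) (nhds |y - y|) :=
          (continuous_abs.comp (continuous_id.sub continuous_const)).tendsto y
        simpa using this
      have h2 : Filter.Tendsto (fun t : ℝ => 2 * C * t ^ α) (nhds 0) (nhds 0) := by
        have hc : ContinuousAt (fun t : ℝ => t ^ α) 0 :=
          Real.continuousAt_rpow_const 0 α (Or.inr hα0.le)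
        have := (hc.tendsto).const_mul (2 * C)
        rw [Real.zero_rpow hαne, mul_zero] at this
        exact this
      exact h2.comp h1
  -- combine
  have hsum := hA.add hB
  rw [add_zero] at hsum
  have hval : (∫ x in Set.Ioo 0 y, α * (y - x) ^ (α - 1) ∂η)
      = α * ∫ x in Set.Ioo 0 y, (y - x) ^ (α - 1) ∂η := integral_const_mul α _
  rw [hval] at hsum
  refine HasDerivAt.congr_of_eventuallyEq hsum ?_
  filter_upwards [eventually_gt_nhds hy] with s hs0
  have e1 : ∫ x in Set.Ioo 0 s, (s - x) ^ α ∂η = ∫ x in Set.Ioo 0 s, φ s x ∂η := by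
    refine setIntegral_congr_fun measurableSet_Ioo fun x hx => ?_
    simp only [hφ]
    rw [max_eq_left (by linarith [hx.2] : (0:ℝ) ≤ s - x)]
  have e2 : ∫ x in Set.Ioo 0 s, φ s x ∂η = ∫ x in Set.Ioi 0, φ s x ∂η := by
    have hcg : ∀ x ∈ Set.Ioi 0, φ s x = (Set.Ioo 0 s).indicator (φ s) x := by
      intro x hx
      simp only [Set.mem_Ioi] at hx
      by_cases hxs : x < s
      · rw [Set.indicator_of_mem (Set.mem_Ioo.mpr ⟨hx, hxs⟩) _]
      · rw [Set.indicator_of_notMem (fun h => hxs (Set.mem_Ioo.mp h).2) _]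
        simp only [hφ]
        rw [max_eq_right (by linarith), Real.zero_rpow hαne]
    rw [setIntegral_congr_fun measurableSet_Ioi hcg, setIntegral_indicator measurableSet_Ioo,
      Set.inter_eq_self_of_subset_right (fun x hx => hx.1)]
  have hu : Set.Ioo 0 y ∪ Set.Ici y = Set.Ioi 0 := by
    ext t
    simp only [Set.mem_union, Set.mem_Ioo, Set.mem_Ici, Set.mem_Ioi]
    constructor
    · rintro (⟨h, _⟩ | h)
      · exact h
      · linarith
    · intro h
      rcases lt_or_ge t y with h2 | h2
      · exact Or.inl ⟨h, h2⟩
      · exact Or.inr h2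
  have e3 : ∫ x in Set.Ioi 0, φ s x ∂η = A s + B s := by
    rw [← hu, setIntegral_union ?_ measurableSet_Ici (hIntφ s _) (hIntφ s _)]
    rw [Set.disjoint_left]
    intro x hx hx2
    simp only [Set.mem_Ioo] at hx
    simp only [Set.mem_Ici] at hx2
    linarith [hx.2]
  rw [e1, e2, e3]
  rfl
end
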